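/- Let X_A, X_B ∈ F, let f, h ∈ G, set w = h ∘ f⁻¹ ∈ G, and let C ≥ 1 satisfy ‖f'‖_{L∞}^{1/2} ≤ C. Then d(X_A • f, X_B • h) ≤ C·d(X_A, X_B • w). -/

import Mathlib

open MeasureTheory Filter Set Real
open scoped ENNReal Classical

noncomputable section

/-- A Lagrangian quadruple `X = (y, U, H, V)` of real-valued functions on `ℝ`. -/
structure LagQuad where
  y : ℝ → ℝ
  U : ℝ → ℝ
  H : ℝ → ℝ
  V : ℝ → ℝ

/-- The real-valued `L^p` norm of a function `ℝ → ℝ` (Lebesgue measure). -/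
def nrm (p : ℝ≥0∞) (f : ℝ → ℝ) : ℝ := (eLpNorm f p volume).toReal

/-- `f` is bounded and Lipschitz. -/
def bddLip (f : ℝ → ℝ) : Prop := (∃ C, ∀ x, |f x| ≤ C) ∧ (∃ K, LipschitzWith K f)

/-- The set `F` of Lagrangian coordinates, for the dissipation parameter `α`. -/
def inF (α : ℝ) (X : LagQuad) : Prop :=
  bddLip (fun ξ => X.y ξ - ξ) ∧ bddLip X.U ∧ bddLip X.H ∧ bddLip X.V ∧
  (∀ᵐ (ξ : ℝ) ∂volume, 0 ≤ deriv X.y ξ) ∧ (∀ᵐ (ξ : ℝ) ∂volume, 0 ≤ deriv X.H ξ) ∧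
  (∃ c > (0 : ℝ), ∀ᵐ (ξ : ℝ) ∂volume, c ≤ deriv X.y ξ + deriv X.H ξ) ∧
  (∀ᵐ (ξ : ℝ) ∂volume, deriv X.y ξ * deriv X.V ξ = (deriv X.U ξ) ^ 2) ∧
  (∀ᵐ (ξ : ℝ) ∂volume, 0 ≤ deriv X.V ξ ∧ deriv X.V ξ ≤ deriv X.H ξ) ∧
  (α = 1 → ∀ᵐ (ξ : ℝ) ∂volume,
    (deriv X.y ξ = 0 → deriv X.V ξ = 0) ∧ (0 < deriv X.y ξ → deriv X.V ξ = deriv X.H ξ)) ∧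
  (α < 1 → ∃ κ : ℝ → ℝ, (∀ ξ, κ ξ = 1 - α ∨ κ ξ = 1) ∧
    (∀ᵐ (ξ : ℝ) ∂volume, deriv X.V ξ = κ ξ * deriv X.H ξ ∧ (deriv X.U ξ < 0 → κ ξ = 1)))

/-- The subset `F₀ = {X ∈ F : y + H = id}`. -/
def inF0 (α : ℝ) (X : LagQuad) : Prop := inF α X ∧ ∀ ξ, X.y ξ + X.H ξ = ξ

/-- The wave-breaking time `τ` of a Lagrangian quadruple. -/
def tauOf (X : LagQuad) (ξ : ℝ) : ℝ≥0∞ :=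
  if deriv X.U ξ < 0 then ENNReal.ofReal (-2 * deriv X.y ξ / deriv X.U ξ)
  else if deriv X.U ξ = 0 ∧ deriv X.y ξ = 0 then 0
  else ⊤

/-- `A = {ξ : U'(ξ) ≥ 0}`. -/
def Aset (X : LagQuad) : Set ℝ := {ξ | 0 ≤ deriv X.U ξ}

/-- `Ω(t) = (A₁ ∩ A₂) ∪ {ξ : t < τ₁(ξ) = τ₂(ξ) < ∞}`. -/
def OmegaT (τ₁ τ₂ : ℝ → ℝ≥0∞) (t : ℝ) (X₁ X₂ : LagQuad) : Set ℝ :=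
  (Aset X₁ ∩ Aset X₂) ∪ {ξ | ENNReal.ofReal t < τ₁ ξ ∧ τ₁ ξ = τ₂ ξ ∧ τ₂ ξ < ⊤}

/-- `G₁₂ = |V₁' − V₂'|·1_Ω + max(V₁',V₂')·1_{Ωᶜ}`. -/
def GfunT (τ₁ τ₂ : ℝ → ℝ≥0∞) (t : ℝ) (X₁ X₂ : LagQuad) (ξ : ℝ) : ℝ :=
  (OmegaT τ₁ τ₂ t X₁ X₂).indicator (fun η => |deriv X₁.V η - deriv X₂.V η|) ξ
    + ((OmegaT τ₁ τ₂ t X₁ X₂)ᶜ).indicator (fun η => max (deriv X₁.V η) (deriv X₂.V η)) ξ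

/-- The Lagrangian distance, with wave-breaking times `τ₁, τ₂` and time parameter `t`. -/
def ddT (τ₁ τ₂ : ℝ → ℝ≥0∞) (t : ℝ) (X₁ X₂ : LagQuad) : ℝ :=
  nrm ⊤ (fun ξ => X₁.y ξ - X₂.y ξ) + nrm ⊤ (fun ξ => X₁.U ξ - X₂.U ξ)
    + nrm 2 (fun ξ => deriv X₁.y ξ - deriv X₂.y ξ)
    + nrm 2 (fun ξ => deriv X₁.U ξ - deriv X₂.U ξ)
    + nrm ⊤ (fun ξ => X₁.H ξ - X₂.H ξ)
    + nrm 1 (GfunT τ₁ τ₂ t X₁ X₂) + nrm 2 (GfunT τ₁ τ₂ t X₁ X₂)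

/-- The metric `d` on `F`. -/
def dmet (X₁ X₂ : LagQuad) : ℝ := ddT (tauOf X₁) (tauOf X₂) 0 X₁ X₂

/-- The norm `‖X_A − X_B‖` (sum of the four sup-norms). -/
def xnorm (XA XB : LagQuad) : ℝ :=
  nrm ⊤ (fun ξ => XA.y ξ - XB.y ξ) + nrm ⊤ (fun ξ => XA.U ξ - XB.U ξ)
    + nrm ⊤ (fun ξ => XA.H ξ - XB.H ξ) + nrm ⊤ (fun ξ => XA.V ξ - XB.V ξ)

/-- The relabelling group `G`. -/
def inG (f : ℝ → ℝ) : Prop :=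
  Function.Bijective f ∧ bddLip (fun x => f x - x) ∧
    bddLip (fun x => Function.invFun f x - x) ∧
    MemLp (fun x => deriv f x - 1) 2 volume

/-- The relabelling action `X • f`. -/
def act (X : LagQuad) (f : ℝ → ℝ) : LagQuad :=
  ⟨fun ξ => X.y (f ξ), fun ξ => X.U (f ξ), fun ξ => X.H (f ξ), fun ξ => X.V (f ξ)⟩

/-- `Π(X) = X • (y + H)⁻¹`. -/
def PiMap (X : LagQuad) : LagQuad := act X (Function.invFun (fun ξ => X.y ξ + X.H ξ))

/-- `J(X_A, X_B) = inf_{f,g ∈ G} ( d(X_A, X_B•f) + d(X_A•g, X_B) )`. -/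
def Jmet (XA XB : LagQuad) : ℝ :=
  sInf {r | ∃ f g, inG f ∧ inG g ∧ r = dmet XA (act XB f) + dmet (act XA g) XB}

/-- `d_F`, the infimum over finite sequences in `F₀` joining `Π X_A` to `Π X_B`. -/
def dFmet (α : ℝ) (XA XB : LagQuad) : ℝ :=
  sInf {r | ∃ (N : ℕ) (Xs : ℕ → LagQuad), (∀ n ≤ N, inF0 α (Xs n)) ∧
    Xs 0 = PiMap XA ∧ Xs N = PiMap XB ∧
    r = ∑ n ∈ Finset.range N, Jmet (Xs (n + 1)) (Xs n)}

/-- The set of points that have experienced wave breaking by time `t`. -/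
def breakSet (X0 : LagQuad) (t : ℝ) : Set ℝ :=
  {η | 0 < tauOf X0 η ∧ tauOf X0 η ≤ ENNReal.ofReal t}

/-- `V(ξ,t) = ∫_{−∞}^ξ V₀'(η)(1 − α·1_{t ≥ τ(η) > 0}(η)) dη`. -/
def Vsol (α : ℝ) (X0 : LagQuad) (t : ℝ) (ξ : ℝ) : ℝ :=
  ∫ η in Set.Iio ξ,
    deriv X0.V η * (1 - α * (breakSet X0 t).indicator (fun _ => (1 : ℝ)) η)

/-- `U(ξ,t) = U₀(ξ) + ∫₀ᵗ (½ V(ξ,s) − ¼ V_∞(s)) ds`. -/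
def Usol (α : ℝ) (X0 : LagQuad) (t : ℝ) (ξ : ℝ) : ℝ :=
  X0.U ξ + ∫ s in (0:ℝ)..t,
    ((1 / 2) * Vsol α X0 s ξ - (1 / 4) * limUnder Filter.atTop (Vsol α X0 s))

/-- `y(ξ,t) = y₀(ξ) + ∫₀ᵗ U(ξ,s) ds`. -/
def ysol (α : ℝ) (X0 : LagQuad) (t : ℝ) (ξ : ℝ) : ℝ :=
  X0.y ξ + ∫ s in (0:ℝ)..t, Usol α X0 s ξ

/-- The α-dissipative solution of the Lagrangian system at time `t`. -/
def sol (α : ℝ) (X0 : LagQuad) (t : ℝ) : LagQuad :=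
  ⟨ysol α X0 t, Usol α X0 t, X0.H, Vsol α X0 t⟩

/-- The Eulerian velocity `u` of `M(X)`: `u(x) = U(ξ)` whenever `x = y(ξ)`. -/
def Mu (X : LagQuad) : ℝ → ℝ := fun x => X.U (Function.invFun X.y x)

/-- The Eulerian energy measure `μ = y_#(V' dξ)` of `M(X)`. -/
def Mmu (X : LagQuad) : Measure ℝ :=
  Measure.map X.y (volume.withDensity fun ξ => ENNReal.ofReal (deriv X.V ξ))

/-- The Eulerian past-energy measure `ν = y_#(H' dξ)` of `M(X)`. -/
def Mnu (X : LagQuad) : Measure ℝ :=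
  Measure.map X.y (volume.withDensity fun ξ => ENNReal.ofReal (deriv X.H ξ))

/-- The set `D` of Eulerian coordinates `(u, μ, ν)`. -/
def inD (α : ℝ) (u : ℝ → ℝ) (μ ν : Measure ℝ) : Prop :=
  (∃ C, ∀ x, |u x| ≤ C) ∧
  (∀ x y : ℝ, u y - u x = ∫ s in x..y, deriv u s) ∧
  MemLp (deriv u) 2 volume ∧
  IsFiniteMeasure μ ∧ IsFiniteMeasure ν ∧ μ ≤ ν ∧
  (μ.rnDeriv volume =ᵐ[volume] fun x => ENNReal.ofReal ((deriv u x) ^ 2)) ∧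
  (α = 1 → μ = volume.withDensity (fun x => ENNReal.ofReal ((deriv u x) ^ 2)) ∧
    ν.rnDeriv volume =ᵐ[volume] fun x => ENNReal.ofReal ((deriv u x) ^ 2)) ∧
  (α < 1 → ∃ k : ℝ → ℝ, (∀ x, k x = 1 ∨ k x = 1 - α) ∧
    (∀ x, deriv u x < 0 → k x = 1) ∧ μ = ν.withDensity (fun x => ENNReal.ofReal (k x)))

/-- `y(ξ) = sup { x : x + ν((−∞,x)) < ξ }` — the Lagrangian characteristic of `(u,μ,ν)`. -/
def yL (ν : Measure ℝ) (ξ : ℝ) : ℝ := sSup {x : ℝ | x + (ν (Set.Iio x)).toReal < ξ}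

/-- The mapping `L : D → F₀` from Eulerian to Lagrangian coordinates. -/
def Lmap (u : ℝ → ℝ) (μ ν : Measure ℝ) : LagQuad :=
  ⟨yL ν, fun ξ => u (yL ν ξ), fun ξ => ξ - yL ν ξ,
    fun ξ => ∫ η in Set.Iio ξ,
      deriv (fun ζ => ζ - yL ν ζ) η * (μ.rnDeriv ν (yL ν η)).toReal⟩

/-- The set `D_{0,M}` of Eulerian pairs `(u, μ)` with total energy at most `M`. -/
def inD0M (α M : ℝ) (u : ℝ → ℝ) (μ : Measure ℝ) : Prop :=
  (∃ C, ∀ x, |u x| ≤ C) ∧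
  (∀ x y : ℝ, u y - u x = ∫ s in x..y, deriv u s) ∧
  MemLp (deriv u) 2 volume ∧
  IsFiniteMeasure μ ∧
  (μ.rnDeriv volume =ᵐ[volume] fun x => ENNReal.ofReal ((deriv u x) ^ 2)) ∧
  (μ Set.univ).toReal ≤ M ∧
  (α = 1 → μ = volume.withDensity (fun x => ENNReal.ofReal ((deriv u x) ^ 2)))

/-- `J_D((u₁,μ₁),(u₂,μ₂)) = inf over admissible ν₁, ν₂ of d_D((u₁,μ₁,ν₁),(u₂,μ₂,ν₂))`. -/
def JD (α : ℝ) (u₁ : ℝ → ℝ) (μ₁ : Measure ℝ) (u₂ : ℝ → ℝ) (μ₂ : Measure ℝ) : ℝ :=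
  sInf {r | ∃ ν₁ ν₂ : Measure ℝ, inD α u₁ μ₁ ν₁ ∧ inD α u₂ μ₂ ν₂ ∧
    r = dFmet α (Lmap u₁ μ₁ ν₁) (Lmap u₂ μ₂ ν₂)}

/-- The Eulerian metric `d_M` on `D_{0,M}`. -/
def dMmet (α M : ℝ) (uA : ℝ → ℝ) (μA : Measure ℝ) (uB : ℝ → ℝ) (μB : Measure ℝ) : ℝ :=
  sInf {r | ∃ (N : ℕ) (us : ℕ → ℝ → ℝ) (μs : ℕ → Measure ℝ),
    (∀ n ≤ N, inD0M α M (us n) (μs n)) ∧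
    us 0 = uA ∧ μs 0 = μA ∧ us N = uB ∧ μs N = μB ∧
    r = ∑ n ∈ Finset.range N, JD α (us (n + 1)) (μs (n + 1)) (us n) (μs n)}

end


section Aux
open MeasureTheory Filter Set Real Topology
open scoped ENNReal NNReal Classical

-- Lipschitz image of a null set is null (in ℝ).
lemma lip_image_null {K : ℝ≥0} {g : ℝ → ℝ} (hg : LipschitzWith K g) {s : Set ℝ}
    (hs : volume s = 0) : volume (g '' s) = 0 := by
  rw [← MeasureTheory.hausdorffMeasure_real] at hs ⊢
  have := hg.hausdorffMeasure_image_le (zero_le_one) s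
  rw [hs, mul_zero] at this
  exact le_antisymm this zero_le

section
variable {f : ℝ → ℝ} {Kf Ki : ℝ≥0}

lemma pre_null (hbij : Function.Bijective f) (hKi : LipschitzWith Ki (Function.invFun f))
    {s : Set ℝ} (hs : volume s = 0) : volume (f ⁻¹' s) = 0 := by
  have hsub : f ⁻¹' s ⊆ Function.invFun f '' s := by
    intro x hx
    exact ⟨f x, hx, Function.leftInverse_invFun hbij.1 x⟩
  exact measure_mono_null hsub (lip_image_null hKi hs)

lemma ae_comp (hbij : Function.Bijective f) (hKi : LipschitzWith Ki (Function.invFun f))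
    {P : ℝ → Prop} (hP : ∀ᵐ z ∂(volume : Measure ℝ), P z) :
    ∀ᵐ x ∂(volume : Measure ℝ), P (f x) := by
  rw [ae_iff] at hP ⊢
  exact measure_mono_null (fun x hx => hx) (pre_null hbij hKi hP)

end

-- change of variables for lintegrals along a bi-Lipschitz bijection of ℝ
lemma cov {f : ℝ → ℝ} {Kf : ℝ≥0} (hbij : Function.Bijective f) (hKf : LipschitzWith Kf f)
    (g : ℝ → ℝ≥0∞) :
    ∫⁻ x, ENNReal.ofReal |deriv f x| * g (f x) ∂(volume : Measure ℝ)
      = ∫⁻ z, g z ∂(volume : Measure ℝ) := by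
  set S : Set ℝ := {x | DifferentiableAt ℝ f x} with hS_def
  have hS : MeasurableSet S := measurableSet_of_differentiableAt ℝ f
  have hSc : volume Sᶜ = 0 := by
    have h := hKf.ae_differentiableAt (μ := volume)
    rw [ae_iff] at h
    exact h
  have hder : ∀ x ∈ S, HasDerivWithinAt f (deriv f x) S x := fun x hx =>
    (hx.hasDerivAt).hasDerivWithinAt
  have key := lintegral_image_eq_lintegral_abs_det_fderiv_mul (volume : Measure ℝ) hS
    (fun x hx => (hder x hx).hasFDerivWithinAt) hbij.1.injOn g
  simp only [ContinuousLinearMap.det_toSpanSingleton] at key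
  have himg : volume (f '' S)ᶜ = 0 := by
    refine measure_mono_null ?_ (lip_image_null hKf hSc)
    intro z hz
    obtain ⟨x, rfl⟩ := hbij.2 z
    exact ⟨x, fun hx => hz ⟨x, hx, rfl⟩, rfl⟩
  calc ∫⁻ x, ENNReal.ofReal |deriv f x| * g (f x) ∂volume
      = ∫⁻ x in S, ENNReal.ofReal |deriv f x| * g (f x) ∂volume := by
        rw [← setLIntegral_univ (μ := volume)]
        refine (setLIntegral_congr ?_).symm
        rw [ae_eq_univ]; exact hSc
    _ = ∫⁻ z in f '' S, g z ∂volume := key.symm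
    _ = ∫⁻ z, g z ∂volume := by
        rw [← setLIntegral_univ (μ := volume) (f := g)]
        refine setLIntegral_congr ?_
        rw [ae_eq_univ]; exact himg
-- essSup of a composition
lemma eLpNormTop_comp_le {φ : ℝ → ℝ}
    (hφ : ∀ s : Set ℝ, volume s = 0 → volume (φ ⁻¹' s) = 0) (g : ℝ → ℝ) :
    eLpNorm (fun x => g (φ x)) ⊤ volume ≤ eLpNorm g ⊤ volume := by
  rw [eLpNorm_exponent_top, eLpNorm_exponent_top]
  have hb : ∀ᵐ z ∂(volume : Measure ℝ), (‖g z‖₊ : ℝ≥0∞) ≤ eLpNormEssSup g volume :=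
    enorm_ae_le_eLpNormEssSup g volume
  have hb' : ∀ᵐ x ∂(volume : Measure ℝ), (‖g (φ x)‖₊ : ℝ≥0∞) ≤ eLpNormEssSup g volume := by
    rw [ae_iff] at hb ⊢
    exact measure_mono_null (fun x hx => hx) (hφ _ hb)
  exact essSup_le_of_ae_le _ hb'

section
variable {f : ℝ → ℝ} {Kf Ki : ℝ≥0}

lemma eLpNormTop_comp_eq (hbij : Function.Bijective f) (hKf : LipschitzWith Kf f)
    (hKi : LipschitzWith Ki (Function.invFun f)) (g : ℝ → ℝ) :
    eLpNorm (fun x => g (f x)) ⊤ volume = eLpNorm g ⊤ volume := by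
  refine le_antisymm (eLpNormTop_comp_le (fun s hs => pre_null hbij hKi hs) g) ?_
  have h2 : ∀ s : Set ℝ, volume s = 0 → volume (Function.invFun f ⁻¹' s) = 0 := by
    intro s hs
    refine measure_mono_null ?_ (lip_image_null hKf hs)
    intro x hx
    exact ⟨Function.invFun f x, hx, Function.rightInverse_invFun hbij.2 x⟩
  have h3 := eLpNormTop_comp_le h2 (fun x => g (f x))
  have heq : (fun x => g (f (Function.invFun f x))) = g := by
    funext x; rw [Function.rightInverse_invFun hbij.2 x]
  rwa [heq] at h3

lemma Ki_pos (hbij : Function.Bijective f) (hKi : LipschitzWith Ki (Function.invFun f)) :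
    0 < Ki := by
  rcases Nat.eq_zero_or_pos 0 with _ | _  -- dummy
  all_goals {
  by_contra hK
  have hK0 : Ki = 0 := le_antisymm (not_lt.mp hK) zero_le
  subst hK0
  have h01 : Function.invFun f (0:ℝ) = Function.invFun f 1 := by
    have h := hKi.dist_le_mul (0:ℝ) 1
    simp only [NNReal.coe_zero, zero_mul] at h
    exact dist_le_zero.mp h
  have hinj : Function.Injective (Function.invFun f) := by
    intro a b hab
    have h2 := congrArg f hab
    rwa [Function.rightInverse_invFun hbij.2, Function.rightInverse_invFun hbij.2] at h2
  exact one_ne_zero (hinj h01).symm }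

-- f is monotone
lemma f_mono (hbij : Function.Bijective f) (hKf : LipschitzWith Kf f)
    {B : ℝ} (hBd : ∀ x, |f x - x| ≤ B) : Monotone f := by
  rcases hKf.continuous.strictMono_of_inj hbij.1 with h | h
  · exact h.monotone
  · exfalso
    set n : ℝ := max 1 (f 0 + B + 1) with hn
    have h1 : f n ≤ f 0 := h.antitone (le_trans zero_le_one (le_max_left _ _))
    have h2 : n - B ≤ f n := by
      have := hBd n
      have := abs_le.mp this
      linarith [this.1]
    have : f 0 + B + 1 ≤ n := le_max_right _ _
    linarith

-- lower bound for deriv f at differentiability points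
lemma deriv_f_lb (hbij : Function.Bijective f) (hKi : LipschitzWith Ki (Function.invFun f))
    (hmono : Monotone f) {x : ℝ} (hx : DifferentiableAt ℝ f x) :
    ((Ki : ℝ))⁻¹ ≤ deriv f x := by
  have hKipos : (0:ℝ) < Ki := by exact_mod_cast Ki_pos hbij hKi
  have hslope : ∀ y ∈ Ioi x, ((Ki : ℝ))⁻¹ ≤ slope f x y := by
    intro y hy
    have hy' : x < y := hy
    have hdist : |y - x| ≤ (Ki : ℝ) * |f y - f x| := by
      have h := hKi.dist_le_mul (f x) (f y)
      rw [Function.leftInverse_invFun hbij.1 x, Function.leftInverse_invFun hbij.1 y] at h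
      rw [Real.dist_eq, Real.dist_eq] at h
      calc |y - x| = |x - y| := abs_sub_comm y x
        _ ≤ (Ki : ℝ) * |f x - f y| := h
        _ = (Ki : ℝ) * |f y - f x| := by rw [abs_sub_comm]
    have hfy : f x ≤ f y := hmono hy'.le
    rw [abs_of_pos (by linarith : (0:ℝ) < y - x), abs_of_nonneg (by linarith : (0:ℝ) ≤ f y - f x)]
      at hdist
    have hyx : (0:ℝ) < y - x := by linarith
    rw [slope_def_field, le_div_iff₀ hyx]
    have h2 := mul_le_mul_of_nonneg_left hdist (inv_nonneg.mpr hKipos.le)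
    rwa [inv_mul_cancel_left₀ hKipos.ne'] at h2
  have htend : Tendsto (slope f x) (𝓝[>] x) (𝓝 (deriv f x)) :=
    (hasDerivAt_iff_tendsto_slope.mp hx.hasDerivAt).mono_left
      (nhdsWithin_mono x (fun y hy => ne_of_gt hy))
  exact ge_of_tendsto htend (eventually_nhdsWithin_of_forall hslope)

end
lemma deriv_abs_le_lip {g : ℝ → ℝ} {K : ℝ≥0} (hg : LipschitzWith K g) (x : ℝ) :
    |deriv g x| ≤ (K : ℝ) := by
  by_cases hx : DifferentiableAt ℝ g x
  · have htend : Tendsto (fun y => |slope g x y|) (𝓝[≠] x) (𝓝 |deriv g x|) :=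
      (hasDerivAt_iff_tendsto_slope.mp hx.hasDerivAt).abs
    refine le_of_tendsto htend (eventually_nhdsWithin_of_forall fun y hy => ?_)
    have hyx : y - x ≠ 0 := sub_ne_zero.mpr hy
    rw [slope_def_field, abs_div]
    rw [div_le_iff₀ (abs_pos.mpr hyx)]
    have := hg.dist_le_mul y x
    rw [Real.dist_eq, Real.dist_eq] at this
    calc |g y - g x| ≤ (K:ℝ) * |y - x| := this
      _ = (K:ℝ) * |y - x| := rfl
  · rw [deriv_zero_of_not_differentiableAt hx]
    simp [K.coe_nonneg]

lemma eLpNormEssSup_deriv_lip_ne_top {g : ℝ → ℝ} {K : ℝ≥0} (hg : LipschitzWith K g) :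
    eLpNormEssSup (deriv g) volume ≠ ⊤ := by
  refine ne_top_of_le_ne_top ENNReal.coe_ne_top
    (eLpNormEssSup_le_of_ae_nnnorm_bound (C := K) (ae_of_all _ fun x => ?_))
  have := deriv_abs_le_lip hg x
  rw [← Real.norm_eq_abs] at this
  exact (by exact_mod_cast this : ‖deriv g x‖₊ ≤ K)

section
variable {f : ℝ → ℝ} {Kf Ki : ℝ≥0}

-- a.e. chain rule
lemma chain_ae (hbij : Function.Bijective f) (hKf : LipschitzWith Kf f)
    (hKi : LipschitzWith Ki (Function.invFun f))
    {g : ℝ → ℝ} {K : ℝ≥0} (hg : LipschitzWith K g) :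
    ∀ᵐ x ∂(volume : Measure ℝ),
      deriv (fun ξ => g (f ξ)) x = deriv g (f x) * deriv f x := by
  filter_upwards [hKf.ae_differentiableAt (μ := volume),
    ae_comp hbij hKi (hg.ae_differentiableAt (μ := volume))] with x hfx hgx
  exact deriv_comp x hgx hfx

end
section
variable {f : ℝ → ℝ} {Kf Ki : ℝ≥0}

lemma lint_one_comp (hbij : Function.Bijective f) (hKf : LipschitzWith Kf f) (G : ℝ → ℝ) :
    eLpNorm (fun x => G (f x) * deriv f x) 1 volume = eLpNorm G 1 volume := by
  rw [eLpNorm_one_eq_lintegral_enorm, eLpNorm_one_eq_lintegral_enorm]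
  simp only [enorm_eq_nnnorm]
  have hpt : ∀ x : ℝ, (‖G (f x) * deriv f x‖₊ : ℝ≥0∞)
      = ENNReal.ofReal |deriv f x| * (‖G (f x)‖₊ : ℝ≥0∞) := by
    intro x
    rw [nnnorm_mul, ENNReal.coe_mul, (by exact Real.enorm_eq_ofReal_abs (deriv f x) : (‖deriv f x‖₊ : ℝ≥0∞) = ENNReal.ofReal |deriv f x|), mul_comm]
  simp_rw [hpt]
  exact cov hbij hKf (fun z => (‖G z‖₊ : ℝ≥0∞))

lemma eLpNorm_two_eq (g : ℝ → ℝ) :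
    eLpNorm g 2 volume = (∫⁻ x, ((‖g x‖₊ : ℝ≥0∞)) ^ (2:ℝ) ∂volume) ^ ((1:ℝ)/2) := by
  rw [eLpNorm_eq_lintegral_rpow_enorm_toReal two_ne_zero ENNReal.ofNat_ne_top]
  simp only [enorm_eq_nnnorm]
  norm_num

lemma sq_split (a : ℝ≥0∞) : a ^ (2:ℝ) = a * a := by
  rw [show (2:ℝ) = ((2:ℕ):ℝ) by norm_num, ENNReal.rpow_natCast, pow_two]

lemma l2_comp_le (hbij : Function.Bijective f) (hKf : LipschitzWith Kf f) (G : ℝ → ℝ) :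
    eLpNorm (fun x => G (f x) * deriv f x) 2 volume
      ≤ (eLpNormEssSup (deriv f) volume) ^ ((1:ℝ)/2) * eLpNorm G 2 volume := by
  set M := eLpNormEssSup (deriv f) volume with hM
  have hMne : M ≠ ⊤ := eLpNormEssSup_deriv_lip_ne_top hKf
  have key : (∫⁻ x, ((‖G (f x) * deriv f x‖₊ : ℝ≥0∞)) ^ (2:ℝ) ∂volume)
      ≤ M * ∫⁻ z, ((‖G z‖₊ : ℝ≥0∞)) ^ (2:ℝ) ∂volume := by
    rw [← cov hbij hKf (fun z => ((‖G z‖₊ : ℝ≥0∞)) ^ (2:ℝ)),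
      ← lintegral_const_mul' _ _ hMne]
    apply lintegral_mono_ae
    filter_upwards [enorm_ae_le_eLpNormEssSup (deriv f) volume] with x hd
    have habs : ENNReal.ofReal |deriv f x| = (‖deriv f x‖₊ : ℝ≥0∞) :=
      ((by exact Real.enorm_eq_ofReal_abs (deriv f x) : (‖deriv f x‖₊ : ℝ≥0∞) = ENNReal.ofReal |deriv f x|)).symm
    calc ((‖G (f x) * deriv f x‖₊ : ℝ≥0∞)) ^ (2:ℝ)
        = (ENNReal.ofReal |deriv f x| * (‖G (f x)‖₊ : ℝ≥0∞)) ^ (2:ℝ) := by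
          rw [nnnorm_mul, ENNReal.coe_mul, (by exact Real.enorm_eq_ofReal_abs (deriv f x) : (‖deriv f x‖₊ : ℝ≥0∞) = ENNReal.ofReal |deriv f x|), mul_comm]
      _ = (ENNReal.ofReal |deriv f x|) ^ (2:ℝ) * ((‖G (f x)‖₊ : ℝ≥0∞)) ^ (2:ℝ) :=
          ENNReal.mul_rpow_of_nonneg _ _ (by norm_num)
      _ ≤ (M * ENNReal.ofReal |deriv f x|) * ((‖G (f x)‖₊ : ℝ≥0∞)) ^ (2:ℝ) := by
          rw [sq_split]
          gcongr
          rw [habs]; exact hd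
      _ = M * (ENNReal.ofReal |deriv f x| * ((‖G (f x)‖₊ : ℝ≥0∞)) ^ (2:ℝ)) := by
          rw [mul_assoc]
  rw [eLpNorm_two_eq, eLpNorm_two_eq]
  calc (∫⁻ x, ((‖G (f x) * deriv f x‖₊ : ℝ≥0∞)) ^ (2:ℝ) ∂volume) ^ ((1:ℝ)/2)
      ≤ (M * ∫⁻ z, ((‖G z‖₊ : ℝ≥0∞)) ^ (2:ℝ) ∂volume) ^ ((1:ℝ)/2) :=
        ENNReal.rpow_le_rpow key (by norm_num)
    _ = M ^ ((1:ℝ)/2) * (∫⁻ z, ((‖G z‖₊ : ℝ≥0∞)) ^ (2:ℝ) ∂volume) ^ ((1:ℝ)/2) :=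
        ENNReal.mul_rpow_of_nonneg _ _ (by norm_num)

lemma l2_comp_ge (hbij : Function.Bijective f) (hKf : LipschitzWith Kf f)
    (hKi : LipschitzWith Ki (Function.invFun f)) (hmono : Monotone f) (G : ℝ → ℝ) :
    eLpNorm G 2 volume
      ≤ ((Ki : ℝ≥0∞)) ^ ((1:ℝ)/2) * eLpNorm (fun x => G (f x) * deriv f x) 2 volume := by
  have hKi0 : Ki ≠ 0 := (Ki_pos hbij hKi).ne'
  have key : (∫⁻ z, ((‖G z‖₊ : ℝ≥0∞)) ^ (2:ℝ) ∂volume)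
      ≤ (Ki : ℝ≥0∞) * ∫⁻ x, ((‖G (f x) * deriv f x‖₊ : ℝ≥0∞)) ^ (2:ℝ) ∂volume := by
    rw [← cov hbij hKf (fun z => ((‖G z‖₊ : ℝ≥0∞)) ^ (2:ℝ)),
      ← lintegral_const_mul' _ _ ENNReal.coe_ne_top]
    apply lintegral_mono_ae
    filter_upwards [hKf.ae_differentiableAt (μ := volume)] with x hx
    have hlb : ((Ki : ℝ≥0∞))⁻¹ ≤ ENNReal.ofReal |deriv f x| := by
      have h1 : ((Ki : ℝ))⁻¹ ≤ deriv f x := deriv_f_lb hbij hKi hmono hx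
      have h2 : ((Ki : ℝ))⁻¹ ≤ |deriv f x| := h1.trans (le_abs_self _)
      calc ((Ki : ℝ≥0∞))⁻¹ = ENNReal.ofReal ((Ki : ℝ))⁻¹ := by
            rw [ENNReal.ofReal_inv_of_pos (by exact_mod_cast Ki_pos hbij hKi),
              ENNReal.ofReal_coe_nnreal]
        _ ≤ ENNReal.ofReal |deriv f x| := ENNReal.ofReal_le_ofReal h2
    have hone : (1 : ℝ≥0∞) ≤ (Ki : ℝ≥0∞) * ENNReal.ofReal |deriv f x| := by
      calc (1:ℝ≥0∞) = (Ki : ℝ≥0∞) * ((Ki : ℝ≥0∞))⁻¹ :=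
            (ENNReal.mul_inv_cancel (by exact_mod_cast hKi0) ENNReal.coe_ne_top).symm
        _ ≤ (Ki : ℝ≥0∞) * ENNReal.ofReal |deriv f x| := by gcongr
    calc ENNReal.ofReal |deriv f x| * ((‖G (f x)‖₊ : ℝ≥0∞)) ^ (2:ℝ)
        = 1 * (ENNReal.ofReal |deriv f x| * ((‖G (f x)‖₊ : ℝ≥0∞)) ^ (2:ℝ)) := (one_mul _).symm
      _ ≤ ((Ki : ℝ≥0∞) * ENNReal.ofReal |deriv f x|)
            * (ENNReal.ofReal |deriv f x| * ((‖G (f x)‖₊ : ℝ≥0∞)) ^ (2:ℝ)) := by gcongr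
      _ = (Ki : ℝ≥0∞) * ((ENNReal.ofReal |deriv f x| * (‖G (f x)‖₊ : ℝ≥0∞)) ^ (2:ℝ)) := by
          rw [ENNReal.mul_rpow_of_nonneg _ _ (by norm_num : (0:ℝ) ≤ 2), sq_split, sq_split]
          ring
      _ = (Ki : ℝ≥0∞) * ((‖G (f x) * deriv f x‖₊ : ℝ≥0∞)) ^ (2:ℝ) := by
          rw [nnnorm_mul, ENNReal.coe_mul, (by exact Real.enorm_eq_ofReal_abs (deriv f x) : (‖deriv f x‖₊ : ℝ≥0∞) = ENNReal.ofReal |deriv f x|), mul_comm (ENNReal.ofReal _)]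
  rw [eLpNorm_two_eq, eLpNorm_two_eq]
  calc (∫⁻ z, ((‖G z‖₊ : ℝ≥0∞)) ^ (2:ℝ) ∂volume) ^ ((1:ℝ)/2)
      ≤ ((Ki : ℝ≥0∞) * ∫⁻ x, ((‖G (f x) * deriv f x‖₊ : ℝ≥0∞)) ^ (2:ℝ) ∂volume) ^ ((1:ℝ)/2) :=
        ENNReal.rpow_le_rpow key (by norm_num)
    _ = ((Ki : ℝ≥0∞)) ^ ((1:ℝ)/2)
          * (∫⁻ x, ((‖G (f x) * deriv f x‖₊ : ℝ≥0∞)) ^ (2:ℝ) ∂volume) ^ ((1:ℝ)/2) :=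
        ENNReal.mul_rpow_of_nonneg _ _ (by norm_num)

end


-- measurability
lemma tau_measurable (X : LagQuad) : Measurable (tauOf X) := by
  unfold tauOf
  have hU : Measurable (deriv X.U) := measurable_deriv _
  have hy : Measurable (deriv X.y) := measurable_deriv _
  refine Measurable.ite (measurableSet_lt hU measurable_const) ?_ ?_
  · exact ENNReal.measurable_ofReal.comp ((measurable_const.mul hy).div hU)
  · refine Measurable.ite ?_ measurable_const measurable_const
    exact MeasurableSet.inter (hU (measurableSet_singleton 0)) (hy (measurableSet_singleton 0))

lemma omega_measurable (X₁ X₂ : LagQuad) (τ₁ τ₂ : ℝ → ℝ≥0∞) (hτ₁ : Measurable τ₁)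
    (hτ₂ : Measurable τ₂) (t : ℝ) : MeasurableSet (OmegaT τ₁ τ₂ t X₁ X₂) := by
  unfold OmegaT Aset
  refine MeasurableSet.union ?_ ?_
  · exact ((measurable_deriv X₁.U) measurableSet_Ici).inter
      ((measurable_deriv X₂.U) measurableSet_Ici)
  · have heq : {ξ : ℝ | ENNReal.ofReal t < τ₁ ξ ∧ τ₁ ξ = τ₂ ξ ∧ τ₂ ξ < ⊤}
        = {ξ | ENNReal.ofReal t < τ₁ ξ} ∩ (({ξ | τ₁ ξ ≤ τ₂ ξ} ∩ {ξ | τ₂ ξ ≤ τ₁ ξ})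
            ∩ {ξ | τ₂ ξ < ⊤}) := by
      ext ξ
      simp only [Set.mem_setOf_eq, Set.mem_inter_iff, le_antisymm_iff]
      try tauto
    rw [heq]
    exact (measurableSet_lt measurable_const hτ₁).inter
      (((measurableSet_le hτ₁ hτ₂).inter (measurableSet_le hτ₂ hτ₁)).inter
        (measurableSet_lt hτ₂ measurable_const))

lemma G_measurable (X₁ X₂ : LagQuad) (τ₁ τ₂ : ℝ → ℝ≥0∞) (hτ₁ : Measurable τ₁)
    (hτ₂ : Measurable τ₂) (t : ℝ) : Measurable (GfunT τ₁ τ₂ t X₁ X₂) := by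
  unfold GfunT
  have hΩ := omega_measurable X₁ X₂ τ₁ τ₂ hτ₁ hτ₂ t
  exact ((((measurable_deriv X₁.V).sub (measurable_deriv X₂.V)).abs).indicator hΩ).add
    (((measurable_deriv X₁.V).max (measurable_deriv X₂.V)).indicator hΩ.compl)

lemma tau_pt {a b d : ℝ} (hd : 0 < d) :
    (if a * d < 0 then ENNReal.ofReal (-2 * (b * d) / (a * d))
      else if a * d = 0 ∧ b * d = 0 then 0 else ⊤)
    = (if a < 0 then ENNReal.ofReal (-2 * b / a) else if a = 0 ∧ b = 0 then (0:ℝ≥0∞) else ⊤) := by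
  have hd0 : d ≠ 0 := hd.ne'
  rcases lt_trichotomy a 0 with ha | ha | ha
  · rw [if_pos (mul_neg_of_neg_of_pos ha hd), if_pos ha]
    congr 1
    rw [show -2 * (b * d) = (-2 * b) * d by ring, mul_div_mul_right _ _ hd0]
  · subst ha
    simp [hd0, lt_irrefl]
  · have h1 : ¬ (a * d < 0) := not_lt.mpr (le_of_lt (mul_pos ha hd))
    have h2 : ¬ (a < 0) := not_lt.mpr ha.le
    have h3 : ¬ (a * d = 0 ∧ b * d = 0) := fun hc => (mul_pos ha hd).ne' hc.1
    have h4 : ¬ (a = 0 ∧ b = 0) := fun hc => ha.ne' hc.1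
    rw [if_neg h1, if_neg h2, if_neg h3, if_neg h4]

section
variable {X₁ X₂ : LagQuad} {f : ℝ → ℝ}

lemma tau_comp_pt {x : ℝ} (hd : 0 < deriv f x)
    (hU : deriv (fun ξ => X₁.U (f ξ)) x = deriv X₁.U (f x) * deriv f x)
    (hy : deriv (fun ξ => X₁.y (f ξ)) x = deriv X₁.y (f x) * deriv f x) :
    tauOf (act X₁ f) x = tauOf X₁ (f x) := by
  have eU : deriv (act X₁ f).U x = deriv X₁.U (f x) * deriv f x := hU
  have ey : deriv (act X₁ f).y x = deriv X₁.y (f x) * deriv f x := hy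
  unfold tauOf
  rw [eU, ey]
  exact tau_pt hd

lemma G_comp_pt {x : ℝ} (hd : 0 < deriv f x)
    (h1U : deriv (fun ξ => X₁.U (f ξ)) x = deriv X₁.U (f x) * deriv f x)
    (h1y : deriv (fun ξ => X₁.y (f ξ)) x = deriv X₁.y (f x) * deriv f x)
    (h1V : deriv (fun ξ => X₁.V (f ξ)) x = deriv X₁.V (f x) * deriv f x)
    (h2U : deriv (fun ξ => X₂.U (f ξ)) x = deriv X₂.U (f x) * deriv f x)
    (h2y : deriv (fun ξ => X₂.y (f ξ)) x = deriv X₂.y (f x) * deriv f x)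
    (h2V : deriv (fun ξ => X₂.V (f ξ)) x = deriv X₂.V (f x) * deriv f x) :
    GfunT (tauOf (act X₁ f)) (tauOf (act X₂ f)) 0 (act X₁ f) (act X₂ f) x
      = GfunT (tauOf X₁) (tauOf X₂) 0 X₁ X₂ (f x) * deriv f x := by
  have e1U : deriv (act X₁ f).U x = deriv X₁.U (f x) * deriv f x := h1U
  have e2U : deriv (act X₂ f).U x = deriv X₂.U (f x) * deriv f x := h2U
  have e1V : deriv (act X₁ f).V x = deriv X₁.V (f x) * deriv f x := h1V
  have e2V : deriv (act X₂ f).V x = deriv X₂.V (f x) * deriv f x := h2V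
  have htau1 := tau_comp_pt hd h1U h1y
  have htau2 : tauOf (act X₂ f) x = tauOf X₂ (f x) := tau_comp_pt hd h2U h2y
  have hmem : x ∈ OmegaT (tauOf (act X₁ f)) (tauOf (act X₂ f)) 0 (act X₁ f) (act X₂ f)
      ↔ f x ∈ OmegaT (tauOf X₁) (tauOf X₂) 0 X₁ X₂ := by
    unfold OmegaT Aset
    simp only [Set.mem_union, Set.mem_inter_iff, Set.mem_setOf_eq]
    rw [htau1, htau2, e1U, e2U, mul_nonneg_iff_of_pos_right hd, mul_nonneg_iff_of_pos_right hd]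
  unfold GfunT
  by_cases hx : f x ∈ OmegaT (tauOf X₁) (tauOf X₂) 0 X₁ X₂
  · rw [Set.indicator_of_mem (hmem.mpr hx), Set.indicator_of_mem hx,
      Set.indicator_of_notMem (Set.notMem_compl_iff.mpr (hmem.mpr hx)),
      Set.indicator_of_notMem (Set.notMem_compl_iff.mpr hx)]
    rw [e1V, e2V, add_zero, add_zero, ← sub_mul, abs_mul, abs_of_pos hd]
  · rw [Set.indicator_of_notMem (fun hc => hx (hmem.mp hc)), Set.indicator_of_notMem hx,
      Set.indicator_of_mem ((Set.mem_compl_iff _ _).mpr (fun hc => hx (hmem.mp hc))),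
      Set.indicator_of_mem ((Set.mem_compl_iff _ _).mpr hx)]
    rw [e1V, e2V, zero_add, zero_add, max_mul_of_nonneg _ _ hd.le]

end

lemma toReal_step {a b : ℝ≥0∞} {c : ℝ} (hc : 0 ≤ c) (h1 : a ≤ ENNReal.ofReal c * b)
    (h2 : b = ⊤ → a = ⊤) : a.toReal ≤ c * b.toReal := by
  by_cases hb : b = ⊤
  · rw [hb, ENNReal.toReal_top, h2 hb, ENNReal.toReal_top, mul_zero]
  · have hfin : ENNReal.ofReal c * b ≠ ⊤ := ENNReal.mul_ne_top ENNReal.ofReal_ne_top hb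
    have h3 := ENNReal.toReal_mono hfin h1
    rwa [ENNReal.toReal_mul, ENNReal.toReal_ofReal hc] at h3

theorem key_relabel (X₁ X₂ : LagQuad)
    {K1y K1U K1V K2y K2U K2V : ℝ≥0}
    (h1y : LipschitzWith K1y X₁.y) (h1U : LipschitzWith K1U X₁.U) (h1V : LipschitzWith K1V X₁.V)
    (h2y : LipschitzWith K2y X₂.y) (h2U : LipschitzWith K2U X₂.U) (h2V : LipschitzWith K2V X₂.V)
    {f : ℝ → ℝ} (hbij : Function.Bijective f) {Kf Ki : ℝ≥0}
    (hKf : LipschitzWith Kf f) (hKi : LipschitzWith Ki (Function.invFun f))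
    (hmono : Monotone f)
    {C : ℝ} (hC : 1 ≤ C) (hfC : Real.sqrt (nrm ⊤ (deriv f)) ≤ C) :
    dmet (act X₁ f) (act X₂ f) ≤ C * dmet X₁ X₂ := by
  have hC0 : (0:ℝ) ≤ C := le_trans zero_le_one hC
  set M := eLpNormEssSup (deriv f) volume with hMdef
  have hMne : M ≠ ⊤ := eLpNormEssSup_deriv_lip_ne_top hKf
  have hMC : M ^ ((1:ℝ)/2) ≤ ENNReal.ofReal C := by
    have hM : M = ENNReal.ofReal M.toReal := (ENNReal.ofReal_toReal hMne).symm
    rw [hM, ENNReal.ofReal_rpow_of_nonneg ENNReal.toReal_nonneg (by norm_num)]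
    apply ENNReal.ofReal_le_ofReal
    have hnrm : nrm ⊤ (deriv f) = M.toReal := by
      rw [nrm, eLpNorm_exponent_top]
    rw [← Real.sqrt_eq_rpow, ← hnrm]
    exact hfC
  have hKine : ((Ki : ℝ≥0∞)) ^ ((1:ℝ)/2) ≠ ⊤ :=
    ENNReal.rpow_ne_top_of_nonneg (by norm_num) ENNReal.coe_ne_top
  have hKipos : (0:ℝ) < (Ki : ℝ) := by exact_mod_cast Ki_pos hbij hKi
  have hdf : ∀ᵐ x ∂(volume : Measure ℝ), 0 < deriv f x := by
    filter_upwards [hKf.ae_differentiableAt (μ := volume)] with x hx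
    exact lt_of_lt_of_le (inv_pos.mpr hKipos) (deriv_f_lb hbij hKi hmono hx)
  -- abbreviations
  set Y₁ := act X₁ f
  set Y₂ := act X₂ f
  -- ######## sup-norm terms ########
  have Ty : nrm ⊤ (fun ξ => Y₁.y ξ - Y₂.y ξ) ≤ C * nrm ⊤ (fun ξ => X₁.y ξ - X₂.y ξ) := by
    have he : eLpNorm (fun ξ => Y₁.y ξ - Y₂.y ξ) ⊤ volume
        = eLpNorm (fun ξ => X₁.y ξ - X₂.y ξ) ⊤ volume :=
      eLpNormTop_comp_eq hbij hKf hKi (fun z => X₁.y z - X₂.y z)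
    rw [nrm, nrm, he]
    exact le_mul_of_one_le_left ENNReal.toReal_nonneg hC
  have TU : nrm ⊤ (fun ξ => Y₁.U ξ - Y₂.U ξ) ≤ C * nrm ⊤ (fun ξ => X₁.U ξ - X₂.U ξ) := by
    have he : eLpNorm (fun ξ => Y₁.U ξ - Y₂.U ξ) ⊤ volume
        = eLpNorm (fun ξ => X₁.U ξ - X₂.U ξ) ⊤ volume :=
      eLpNormTop_comp_eq hbij hKf hKi (fun z => X₁.U z - X₂.U z)
    rw [nrm, nrm, he]
    exact le_mul_of_one_le_left ENNReal.toReal_nonneg hC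
  have TH : nrm ⊤ (fun ξ => Y₁.H ξ - Y₂.H ξ) ≤ C * nrm ⊤ (fun ξ => X₁.H ξ - X₂.H ξ) := by
    have he : eLpNorm (fun ξ => Y₁.H ξ - Y₂.H ξ) ⊤ volume
        = eLpNorm (fun ξ => X₁.H ξ - X₂.H ξ) ⊤ volume :=
      eLpNormTop_comp_eq hbij hKf hKi (fun z => X₁.H z - X₂.H z)
    rw [nrm, nrm, he]
    exact le_mul_of_one_le_left ENNReal.toReal_nonneg hC
  -- ######## L² derivative terms ########
  have LT : ∀ (g₁ g₂ : ℝ → ℝ) (K₁ K₂ : ℝ≥0), LipschitzWith K₁ g₁ → LipschitzWith K₂ g₂ →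
      nrm 2 (fun ξ => deriv (fun η => g₁ (f η)) ξ - deriv (fun η => g₂ (f η)) ξ)
        ≤ C * nrm 2 (fun ξ => deriv g₁ ξ - deriv g₂ ξ) := by
    intro g₁ g₂ K₁ K₂ hg₁ hg₂
    set G : ℝ → ℝ := fun z => deriv g₁ z - deriv g₂ z with hGdef
    have hae : (fun ξ => deriv (fun η => g₁ (f η)) ξ - deriv (fun η => g₂ (f η)) ξ)
        =ᵐ[volume] (fun x => G (f x) * deriv f x) := by
      filter_upwards [chain_ae hbij hKf hKi hg₁, chain_ae hbij hKf hKi hg₂] with x e1 e2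
      rw [e1, e2, hGdef]
      ring
    have heq : eLpNorm (fun ξ => deriv (fun η => g₁ (f η)) ξ - deriv (fun η => g₂ (f η)) ξ)
        2 volume = eLpNorm (fun x => G (f x) * deriv f x) 2 volume := eLpNorm_congr_ae hae
    rw [nrm, nrm, heq]
    refine toReal_step hC0 ?_ ?_
    · calc eLpNorm (fun x => G (f x) * deriv f x) 2 volume
          ≤ M ^ ((1:ℝ)/2) * eLpNorm G 2 volume := l2_comp_le hbij hKf G
        _ ≤ ENNReal.ofReal C * eLpNorm G 2 volume := mul_le_mul_left hMC _
    · intro htop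
      by_contra hane
      have hge := l2_comp_ge hbij hKf hKi hmono G
      rw [htop, top_le_iff] at hge
      exact (ENNReal.mul_ne_top hKine hane) hge
  have Tdy : nrm 2 (fun ξ => deriv Y₁.y ξ - deriv Y₂.y ξ)
      ≤ C * nrm 2 (fun ξ => deriv X₁.y ξ - deriv X₂.y ξ) := LT X₁.y X₂.y _ _ h1y h2y
  have TdU : nrm 2 (fun ξ => deriv Y₁.U ξ - deriv Y₂.U ξ)
      ≤ C * nrm 2 (fun ξ => deriv X₁.U ξ - deriv X₂.U ξ) := LT X₁.U X₂.U _ _ h1U h2U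
  -- ######## G terms ########
  set Gg : ℝ → ℝ := GfunT (tauOf X₁) (tauOf X₂) 0 X₁ X₂ with hGgdef
  have hGae : (GfunT (tauOf Y₁) (tauOf Y₂) 0 Y₁ Y₂)
      =ᵐ[volume] (fun x => Gg (f x) * deriv f x) := by
    filter_upwards [hdf, chain_ae hbij hKf hKi h1U, chain_ae hbij hKf hKi h1y,
      chain_ae hbij hKf hKi h1V, chain_ae hbij hKf hKi h2U, chain_ae hbij hKf hKi h2y,
      chain_ae hbij hKf hKi h2V] with x hd e1U e1y e1V e2U e2y e2V
    exact G_comp_pt hd e1U e1y e1V e2U e2y e2V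
  have TG1 : nrm 1 (GfunT (tauOf Y₁) (tauOf Y₂) 0 Y₁ Y₂)
      ≤ C * nrm 1 Gg := by
    have heq : eLpNorm (GfunT (tauOf Y₁) (tauOf Y₂) 0 Y₁ Y₂) 1 volume
        = eLpNorm Gg 1 volume := by
      rw [eLpNorm_congr_ae hGae]
      exact lint_one_comp hbij hKf Gg
    rw [nrm, nrm, heq]
    exact le_mul_of_one_le_left ENNReal.toReal_nonneg hC
  have TG2 : nrm 2 (GfunT (tauOf Y₁) (tauOf Y₂) 0 Y₁ Y₂)
      ≤ C * nrm 2 Gg := by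
    rw [nrm, nrm, eLpNorm_congr_ae hGae]
    refine toReal_step hC0 ?_ ?_
    · calc eLpNorm (fun x => Gg (f x) * deriv f x) 2 volume
          ≤ M ^ ((1:ℝ)/2) * eLpNorm Gg 2 volume := l2_comp_le hbij hKf Gg
        _ ≤ ENNReal.ofReal C * eLpNorm Gg 2 volume := mul_le_mul_left hMC _
    · intro htop
      by_contra hane
      have hge := l2_comp_ge hbij hKf hKi hmono Gg
      rw [htop, top_le_iff] at hge
      exact (ENNReal.mul_ne_top hKine hane) hge
  -- ######## assembling ########
  show ddT (tauOf Y₁) (tauOf Y₂) 0 Y₁ Y₂ ≤ C * ddT (tauOf X₁) (tauOf X₂) 0 X₁ X₂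
  rw [ddT, ddT]
  calc nrm ⊤ (fun ξ => Y₁.y ξ - Y₂.y ξ) + nrm ⊤ (fun ξ => Y₁.U ξ - Y₂.U ξ)
        + nrm 2 (fun ξ => deriv Y₁.y ξ - deriv Y₂.y ξ)
        + nrm 2 (fun ξ => deriv Y₁.U ξ - deriv Y₂.U ξ)
        + nrm ⊤ (fun ξ => Y₁.H ξ - Y₂.H ξ)
        + nrm 1 (GfunT (tauOf Y₁) (tauOf Y₂) 0 Y₁ Y₂)
        + nrm 2 (GfunT (tauOf Y₁) (tauOf Y₂) 0 Y₁ Y₂)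
      ≤ C * nrm ⊤ (fun ξ => X₁.y ξ - X₂.y ξ) + C * nrm ⊤ (fun ξ => X₁.U ξ - X₂.U ξ)
        + C * nrm 2 (fun ξ => deriv X₁.y ξ - deriv X₂.y ξ)
        + C * nrm 2 (fun ξ => deriv X₁.U ξ - deriv X₂.U ξ)
        + C * nrm ⊤ (fun ξ => X₁.H ξ - X₂.H ξ)
        + C * nrm 1 Gg + C * nrm 2 Gg := by
        exact add_le_add (add_le_add (add_le_add (add_le_add (add_le_add
          (add_le_add Ty TU) Tdy) TdU) TH) TG1) TG2
    _ = C * (nrm ⊤ (fun ξ => X₁.y ξ - X₂.y ξ) + nrm ⊤ (fun ξ => X₁.U ξ - X₂.U ξ)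
        + nrm 2 (fun ξ => deriv X₁.y ξ - deriv X₂.y ξ)
        + nrm 2 (fun ξ => deriv X₁.U ξ - deriv X₂.U ξ)
        + nrm ⊤ (fun ξ => X₁.H ξ - X₂.H ξ)
        + nrm 1 Gg + nrm 2 Gg) := by ring

lemma lip_add_id {g : ℝ → ℝ} {K : ℝ≥0} (hK : LipschitzWith K g) :
    LipschitzWith (K + 1) (fun x => g x + x) := by
  apply LipschitzWith.of_dist_le_mul
  intro x y
  have h1 := hK.dist_le_mul x y
  simp only [Real.dist_eq] at h1 ⊢
  push_cast
  calc |g x + x - (g y + y)| = |(g x - g y) + (x - y)| := by ring_nf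
    _ ≤ |g x - g y| + |x - y| := abs_add_le _ _
    _ ≤ (K : ℝ) * |x - y| + |x - y| := by linarith [le_abs_self (x - y), h1]
    _ = ((K : ℝ) + 1) * |x - y| := by ring

lemma lip_of_bddLip_sub_id {g : ℝ → ℝ} (hb : bddLip (fun x => g x - x)) :
    ∃ K : ℝ≥0, LipschitzWith K g := by
  obtain ⟨-, K, hK⟩ := hb
  refine ⟨K + 1, ?_⟩
  have hg : g = (fun x => (g x - x) + x) := funext fun x => by ring
  rw [hg]
  exact lip_add_id hK

end Aux

/-- for `X_A, X_B ∈ F`, `f, h ∈ G`, `w = h ∘ f⁻¹` and `C ≥ 1` with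
`‖f'‖_{L∞}^{1/2} ≤ C`, one has `d(X_A • f, X_B • h) ≤ C·d(X_A, X_B • w)`. -/
theorem statement10 (α : ℝ) (hα : α ∈ Set.Icc (0 : ℝ) 1)
    (XA XB : LagQuad) (hA : inF α XA) (hB : inF α XB)
    (f h : ℝ → ℝ) (hf : inG f) (hh : inG h)
    (C : ℝ) (hC : 1 ≤ C) (hfC : Real.sqrt (nrm ⊤ (deriv f)) ≤ C) :
    dmet (act XA f) (act XB h) ≤
      C * dmet XA (act XB (h ∘ Function.invFun f)) := by
  classical
  obtain ⟨hbij, hfsub, hfinv, -⟩ := hf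
  obtain ⟨Kf, hKf⟩ := lip_of_bddLip_sub_id hfsub
  obtain ⟨Ki, hKi⟩ := lip_of_bddLip_sub_id hfinv
  obtain ⟨-, hhsub, -, -⟩ := hh
  obtain ⟨Kh, hKh⟩ := lip_of_bddLip_sub_id hhsub
  obtain ⟨⟨Bf, hBf⟩, -⟩ := hfsub
  have hmono : Monotone f := f_mono hbij hKf hBf
  -- Lipschitz constants for the components of XA
  obtain ⟨KAy, hAy⟩ := lip_of_bddLip_sub_id hA.1
  obtain ⟨KAU, hAU⟩ := hA.2.1.2
  obtain ⟨KAV, hAV⟩ := hA.2.2.2.1.2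
  obtain ⟨KBy, hBy⟩ := lip_of_bddLip_sub_id hB.1
  obtain ⟨KBU, hBU⟩ := hB.2.1.2
  obtain ⟨KBV, hBV⟩ := hB.2.2.2.1.2
  set w : ℝ → ℝ := h ∘ Function.invFun f with hwdef
  have hw : LipschitzWith (Kh * Ki) w := hKh.comp hKi
  set Z := act XB w with hZdef
  have hZy : LipschitzWith (KBy * (Kh * Ki)) Z.y := hBy.comp hw
  have hZU : LipschitzWith (KBU * (Kh * Ki)) Z.U := hBU.comp hw
  have hZV : LipschitzWith (KBV * (Kh * Ki)) Z.V := hBV.comp hw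
  have hwf : ∀ ξ, w (f ξ) = h ξ := by
    intro ξ
    show h (Function.invFun f (f ξ)) = h ξ
    rw [Function.leftInverse_invFun hbij.1 ξ]
  have hact : act XB h = act Z f := by
    rw [hZdef]
    unfold act
    simp only [LagQuad.mk.injEq]
    exact ⟨funext fun ξ => by rw [hwf ξ], funext fun ξ => by rw [hwf ξ],
      funext fun ξ => by rw [hwf ξ], funext fun ξ => by rw [hwf ξ]⟩
  rw [hact]
  exact key_relabel XA Z hAy hAU hAV hZy hZU hZV hbij hKf hKi hmono hC hfC
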